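/- Let P₀ ≥ P_sleep ≥ 0, γ ≥ 0 with γ + (P₀ − P_sleep) > 0, σ > 0, α ∈ (0,1]. The function f(x) = (P₀ − P_sleep + γσ^{2α}(2^x − 1)^α)/x is convex on (0, ∞). -/

import Mathlib

open Real Set

lemma key_ineq (α s t : ℝ) (hs : 0 < s) (hα : 0 < α) (hα1 : α ≤ 1)
    (ht : 1 + s + s^2/2 ≤ t) :
    0 ≤ α^2*s^2*t^2 - α*s^2*t - 2*α*s*t*(t-1) + 2*(t-1)^2 := by
  have ht1 : 1 < t := by nlinarith
  have ht0 : 0 < t := by linarith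
  rcases le_or_gt (2*s*t) (s + 2*(t-1)) with hA | hB
  · have h2 : 0 ≤ s^2 - 2*s + 2 := by nlinarith [sq_nonneg (s-1)]
    have hq1 : 0 ≤ (t-1)*(t*(s^2-2*s+2) - 2) := by
      have := mul_nonneg (by linarith : (0:ℝ) ≤ t - (1+s+s^2/2)) h2
      nlinarith [sq_nonneg (s^2)]
    have hst : 0 < s * t := mul_pos hs ht0
    have hfac : s^2*t^2*(α+1) ≤ s^2*t + 2*s*t*(t-1) := by
      have h3 := mul_nonneg hst.le (by linarith : (0:ℝ) ≤ s + 2*(t-1) - 2*s*t)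
      nlinarith [mul_nonneg (mul_nonneg (sq_nonneg s) (sq_nonneg t)) (by linarith : (0:ℝ) ≤ 1 - α)]
    nlinarith [mul_nonneg (sub_nonneg.2 hα1) (sub_nonneg.2 hfac)]
  · have hx : s + s^2/2 ≤ t - 1 := by linarith
    have hss : 1 ≤ s^2 + s := by
      rcases le_or_gt 1 s with h | h
      · nlinarith
      · nlinarith
    have hdisc : (s + 2*(t-1))^2 ≤ 8*(t-1)^2 := by
      nlinarith [sq_nonneg (2*(t-1) - 2*s - s^2), mul_pos hs hs, sq_nonneg (s*(t-1))]
    nlinarith [sq_nonneg (2*(s^2*t^2)*α - (s^2*t + 2*s*t*(t-1))), mul_pos (mul_pos hs hs) (mul_pos ht0 ht0), sq_nonneg (s*t)]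

lemma aux_convex (C K c α : ℝ) (hC : 0 ≤ C) (hK : 0 ≤ K) (hc : 0 < c)
    (hα : 0 < α) (hα1 : α ≤ 1) :
    ConvexOn ℝ (Set.Ioi (0:ℝ))
      (fun x => (C + K * (Real.exp (c * x) - 1) ^ α) / x) := by
  set E : ℝ → ℝ := fun x => Real.exp (c * x) with hE
  set p : ℝ → ℝ := fun x => Real.exp (c * x) - 1 with hp
  set u : ℝ → ℝ := fun x => C + K * (Real.exp (c * x) - 1) ^ α with hu
  set u1 : ℝ → ℝ := fun x => K * (E x * c * α * p x ^ (α - 1)) with hu1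
  set u2 : ℝ → ℝ := fun x =>
    K * (E x * c * c * α * p x ^ (α - 1)
      + E x * c * α * ((α - 1) * (E x * c) * p x ^ (α - 2))) with hu2
  have hpE : ∀ x : ℝ, 0 < x → 0 < p x := by
    intro x hx
    have : (1:ℝ) < Real.exp (c * x) := by
      rw [Real.one_lt_exp_iff]  -- maybe wrong name
      positivity
    simpa [hp] using sub_pos.2 this
  have hEd : ∀ x : ℝ, HasDerivAt E (E x * c) x := by
    intro x
    simpa using ((hasDerivAt_id x).const_mul c).exp
  have hpd : ∀ x : ℝ, HasDerivAt p (E x * c) x := fun x => (hEd x).sub_const 1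
  have hud : ∀ x ∈ Ioi (0:ℝ), HasDerivAt u (u1 x) x := by
    intro x hx
    have h1 : HasDerivAt (fun y => p y ^ α) (E x * c * α * p x ^ (α - 1)) x :=
      (hpd x).rpow_const (Or.inl (hpE x hx).ne')
    simpa [hu, hu1] using (h1.const_mul K).const_add C
  have hu1d : ∀ x ∈ Ioi (0:ℝ), HasDerivAt u1 (u2 x) x := by
    intro x hx
    have hB : HasDerivAt (fun y => p y ^ (α - 1)) (E x * c * (α - 1) * p x ^ (α - 1 - 1)) x :=
      (hpd x).rpow_const (Or.inl (hpE x hx).ne')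
    have hA : HasDerivAt (fun y => E y * c * α) (E x * c * c * α) x :=
      ((hEd x).mul_const c).mul_const α
    have := (hA.mul hB).const_mul K
    have he : α - 1 - 1 = α - 2 := by ring
    rw [he] at this
    refine this.congr_deriv ?_
    simp only [hu2]
    ring
  -- f and its derivatives
  set f1 : ℝ → ℝ := fun x => (u1 x * x - u x) / x ^ 2 with hf1
  set f2 : ℝ → ℝ := fun x => (u2 x * x ^ 2 - 2 * (u1 x) * x + 2 * u x) / x ^ 3 with hf2
  have hfd : ∀ x ∈ Ioi (0:ℝ), HasDerivAt (fun x => u x / x) (f1 x) x := by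
    intro x hx
    have hx0 : x ≠ 0 := (ne_of_gt hx)
    exact ((hud x hx).div (hasDerivAt_id x) hx0).congr_deriv (by simp [hf1])
  have hf1d : ∀ x ∈ Ioi (0:ℝ), HasDerivAt f1 (f2 x) x := by
    intro x hx
    have hx0 : x ≠ 0 := (ne_of_gt hx)
    have hN : HasDerivAt (fun y => u1 y * y - u y) (u2 x * x + u1 x * 1 - u1 x) x :=
      ((hu1d x hx).mul (hasDerivAt_id x)).sub (hud x hx)
    have hD : HasDerivAt (fun y : ℝ => y ^ 2) (2 * x) x := by
      simpa using hasDerivAt_pow 2 x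
    have hx2 : x ^ 2 ≠ 0 := pow_ne_zero 2 hx0
    have := hN.div hD hx2
    have heq : ((u2 x * x + u1 x * 1 - u1 x) * x ^ 2 - (u1 x * x - u x) * (2 * x)) / (x ^ 2) ^ 2
        = f2 x := by
      simp only [hf2]
      field_simp
      ring
    rw [heq] at this
    exact this
  -- nonnegativity of second derivative
  have hf2nn : ∀ x ∈ Ioi (0:ℝ), 0 ≤ f2 x := by
    intro x hx
    have hx0 : 0 < x := hx
    have hpx : 0 < p x := hpE x hx
    have hs : 0 < c * x := mul_pos hc hx0
    have htq : 1 + c * x + (c * x) ^ 2 / 2 ≤ E x := Real.quadratic_le_exp_of_nonneg hs.le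
    have hkey := key_ineq α (c * x) (E x) hs hα hα1 htq
    have hEp : E x - 1 = p x := rfl
    rw [hEp] at hkey
    have hApos : 0 < p x ^ α := Real.rpow_pos_of_pos hpx α
    have e1 : p x ^ (α - 1) = p x ^ α / p x := by
      rw [Real.rpow_sub hpx, Real.rpow_one]
    have e2 : p x ^ (α - 2) = p x ^ α / p x ^ 2 := by
      rw [show (2:ℝ) = ((2:ℕ):ℝ) by norm_num, Real.rpow_sub hpx, Real.rpow_natCast]
    have hnum : u2 x * x ^ 2 - 2 * (u1 x) * x + 2 * u x
        = 2 * C + (K * (p x ^ α) / (p x ^ 2)) *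
          (α^2*(c*x)^2*(E x)^2 - α*(c*x)^2*(E x) - 2*α*(c*x)*(E x)*(p x) + 2*(p x)^2) := by
      rw [hu2, hu1, hu]
      simp only [e1, e2]
      have hEx : E x = p x + 1 := by simp [hE, hp]
      field_simp
      ring
    show 0 ≤ (u2 x * x ^ 2 - 2 * u1 x * x + 2 * u x) / x ^ 3
    rw [hnum]
    have h1 : 0 ≤ (K * (p x ^ α) / (p x ^ 2)) *
        (α^2*(c*x)^2*(E x)^2 - α*(c*x)^2*(E x) - 2*α*(c*x)*(E x)*(p x) + 2*(p x)^2) := by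
      apply mul_nonneg
      · positivity
      · exact hkey
    positivity
  -- assemble
  have hint : interior (Ioi (0:ℝ)) = Ioi (0:ℝ) := isOpen_Ioi.interior_eq
  apply convexOn_of_hasDerivWithinAt2_nonneg (f' := f1) (f'' := f2) (convex_Ioi 0)
  · intro x hx
    exact (hfd x hx).differentiableAt.continuousAt.continuousWithinAt
  · rw [hint]; intro x hx; exact (hfd x hx).hasDerivWithinAt
  · rw [hint]; intro x hx; exact (hf1d x hx).hasDerivWithinAt
  · rw [hint]; intro x hx; exact hf2nn x hx

theorem stmt_15 (P0 Psleep γ σ α : ℝ) (h1 : Psleep ≤ P0) (h2 : 0 ≤ Psleep)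
    (hγ : 0 ≤ γ) (hpos : 0 < γ + (P0 - Psleep)) (hσ : 0 < σ)
    (hα0 : 0 < α) (hα1 : α ≤ 1) :
    ConvexOn ℝ (Set.Ioi (0 : ℝ))
      (fun x => (P0 - Psleep + γ * σ ^ (2 * α) * ((2 : ℝ) ^ x - 1) ^ α) / x) := by
  have hK : 0 ≤ γ * σ ^ (2 * α) := mul_nonneg hγ (Real.rpow_pos_of_pos hσ _).le
  have hc : 0 < Real.log 2 := Real.log_pos one_lt_two
  have h := aux_convex (P0 - Psleep) (γ * σ ^ (2 * α)) (Real.log 2) α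
    (by linarith) hK hc hα0 hα1
  convert h using 2 with x
  rw [Real.rpow_def_of_pos (by norm_num : (0:ℝ) < 2)]
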